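/- Let Q0 be a finite nonempty type and E : Q0 → Q0 → ℤ a symmetric matrix with E i i = 1 for all i and E i j ≤ 0 for i ≠ j, with form ⟨x, y⟩ := Σ_{i,j} x i * E i j * y j. Let δ : Q0 → ℕ satisfy condition (∗) for E, and let τ : Q0 → ℕ be a dimension vector with τ i ≥ 1 for every i and ⟨e_i, τ⟩ < 0 for every i. Define the rational number M(τ) := max( max_{i ∈ Q0} (1 − 1/τ i) · ⟨e_i, τ⟩ , −(min_{i ∈ Q0} τ i) · (min_{j ∈ supp δ} τ j) ). Then for every dimension vector v : Q0 → ℕ with v ≤ τ, v ≠ 0 and v ≠ τ, one has ⟨v, τ − v⟩ ≤ M(τ). -/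

import Mathlib

open Finset

/-- The bilinear form associated to an integer matrix `E`:
`⟨x, y⟩ = Σ_{i,j} x i * E i j * y j`. -/
def bform {Q0 : Type*} [Fintype Q0] (E : Q0 → Q0 → ℤ) (x y : Q0 → ℤ) : ℤ :=
  ∑ i, ∑ j, x i * E i j * y j

/-- A dimension vector `Q0 → ℕ` viewed as an integer vector. -/
def nvec {Q0 : Type*} (v : Q0 → ℕ) : Q0 → ℤ := fun i => (v i : ℤ)

/-- The underlying simple graph of a quiver with matrix `E`: `i` is adjacent to `j`
iff `i ≠ j` and the `(i,j)` entry is negative (for symmetric `E` this is the usual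
adjacency `E i j < 0`). -/
def quivGraph {Q0 : Type*} (E : Q0 → Q0 → ℤ) : SimpleGraph Q0 where
  Adj i j := i ≠ j ∧ (E i j < 0 ∨ E j i < 0)
  symm := ⟨fun _ _ h => ⟨h.1.symm, h.2.symm⟩⟩
  loopless := ⟨fun _ h => h.1 rfl⟩

/-- The subgraph of `quivGraph E` induced on the support of `δ`. -/
def suppGraph {Q0 : Type*} (E : Q0 → Q0 → ℤ) (δ : Q0 → ℕ) :
    SimpleGraph {i : Q0 // δ i ≠ 0} :=
  (quivGraph E).comap Subtype.val

/-- Condition (∗): `⟨e_i, δ⟩ < 0` for every vertex `i`, and any two connected components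
of the subgraph induced on `supp δ` are at distance at most one, i.e. either they are
joined by an edge or some vertex is adjacent to both. -/
def condStar {Q0 : Type*} [Fintype Q0] [DecidableEq Q0]
    (E : Q0 → Q0 → ℤ) (δ : Q0 → ℕ) : Prop :=
  (∀ i : Q0, bform E (Pi.single i 1) (nvec δ) < 0) ∧
    ∀ u v : {i : Q0 // δ i ≠ 0},
      (suppGraph E δ).Reachable u v ∨
        ∃ x y : {i : Q0 // δ i ≠ 0},
          (suppGraph E δ).Reachable u x ∧ (suppGraph E δ).Reachable v y ∧
            ((quivGraph E).Adj x.1 y.1 ∨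
              ∃ w : Q0, (quivGraph E).Adj w x.1 ∧ (quivGraph E).Adj w y.1)

/-- Weak condition (∗): as `condStar` but with `⟨e_i, δ⟩ ≤ 0`. -/
def condStarWeak {Q0 : Type*} [Fintype Q0] [DecidableEq Q0]
    (E : Q0 → Q0 → ℤ) (δ : Q0 → ℕ) : Prop :=
  (∀ i : Q0, bform E (Pi.single i 1) (nvec δ) ≤ 0) ∧
    ∀ u v : {i : Q0 // δ i ≠  0},
      (suppGraph E δ).Reachable u v ∨
        ∃ x y : {i : Q0 // δ i ≠ 0},
          (suppGraph E δ).Reachable u x ∧ (suppGraph E δ).Reachable v y ∧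
            ((quivGraph E).Adj x.1 y.1 ∨
              ∃ w : Q0, (quivGraph E).Adj w x.1 ∧ (quivGraph E).Adj w y.1)

lemma quivGraph_adj {Q0 : Type*} (E : Q0 → Q0 → ℤ) (i j : Q0) :
    (quivGraph E).Adj i j ↔ i ≠ j ∧ (E i j < 0 ∨ E j i < 0) := Iff.rfl

lemma suppGraph_adj {Q0 : Type*} (E : Q0 → Q0 → ℤ) (δ : Q0 → ℕ)
    (a b : {i : Q0 // δ i ≠ 0}) :
    (suppGraph E δ).Adj a b ↔ (quivGraph E).Adj a.1 b.1 := Iff.rfl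

lemma bform_single {Q0 : Type*} [Fintype Q0] [DecidableEq Q0] (E : Q0 → Q0 → ℤ)
    (i : Q0) (τ : Q0 → ℕ) : bform E (Pi.single i 1) (nvec τ) = ∑ j, E i j * (τ j : ℤ) := by
  unfold bform nvec
  rw [Finset.sum_eq_single i]
  · simp
  · intro b _ hb; simp [Pi.single_apply, hb]
  · simp

lemma cross_of_walk {α : Type*} {G : SimpleGraph α} (P : α → Prop) :
    ∀ {u x : α}, G.Walk u x → P u → ¬P x → ∃ a b, G.Adj a b ∧ P a ∧ ¬P b := by
  intro u x w
  induction w with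
  | nil => intro hu hx; exact absurd hu hx
  | @cons u' m x' h p ih =>
    intro hu hx
    by_cases hm : P m
    · exact ih hm hx
    · exact ⟨_, _, h, hu, hm⟩

lemma sum_le_term {M : Type*} [AddCommGroup M] [PartialOrder M] [IsOrderedAddMonoid M] {Q0 : Type*} [Fintype Q0]
    [DecidableEq Q0] (f : Q0 → M) (h : ∀ i, f i ≤ 0) (a : Q0) : (∑ i, f i) ≤ f a := by
  rw [← Finset.add_sum_erase _ _ (Finset.mem_univ a)]
  have h2 : (∑ i ∈ Finset.univ.erase a, f i) ≤ 0 := Finset.sum_nonpos (fun i _ => h i)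
  simpa using add_le_add_left h2 (f a)

lemma sum_sum_le_term {M : Type*} [AddCommGroup M] [PartialOrder M] [IsOrderedAddMonoid M] {Q0 : Type*} [Fintype Q0]
    [DecidableEq Q0] (f : Q0 → Q0 → M) (h : ∀ i j, f i j ≤ 0) (a b : Q0) :
    (∑ i, ∑ j, f i j) ≤ f a b := by
  have h1 : (∑ i, ∑ j, f i j) ≤ ∑ j, f a j :=
    sum_le_term (fun i => ∑ j, f i j) (fun i => Finset.sum_nonpos fun j _ => h i j) a
  exact h1.trans (sum_le_term (f a) (h a) b)


/-- The explicit bound (3.2) from the proof of Lemma 3.2 / Remark 3.5: for `δ` satisfying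
(∗) (which together with `Q0 ≠ ∅` forces `supp δ ≠ ∅`, recorded as `hne`) and any `τ` with
all entries positive and `⟨e_i, τ⟩ < 0`, every proper nonzero subvector `v ≤ τ` satisfies
`⟨v, τ - v⟩ ≤ M(τ) = max(max_i (1 - 1/τ_i)⟨e_i, τ⟩, -(min_i τ_i)(min_{j ∈ supp δ} τ_j))`. -/
theorem form_le_explicit_bound
    {Q0 : Type*} [Fintype Q0] [DecidableEq Q0] [Nonempty Q0]
    (E : Q0 → Q0 → ℤ) (hsymm : ∀ i j, E i j = E j i)
    (hdiag : ∀ i, E i i = 1) (hoff : ∀ i j, i ≠ j → E i j ≤ 0)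
    (δ : Q0 → ℕ) (hδ : condStar E δ)
    (hne : (Finset.univ.filter fun j => δ j ≠ 0).Nonempty)
    (τ : Q0 → ℕ) (hτ1 : ∀ i, 1 ≤ τ i)
    (hτ2 : ∀ i, bform E (Pi.single i 1) (nvec τ) < 0)
    (v : Q0 → ℕ) (hv : ∀ i, v i ≤ τ i) (hv0 : v ≠ 0) (hvτ : v ≠ τ) :
    (bform E (nvec v) (nvec τ - nvec v) : ℚ) ≤
      max
        (Finset.univ.sup' Finset.univ_nonempty fun i =>
          (1 - 1 / (τ i : ℚ)) * (bform E (Pi.single i 1) (nvec τ) : ℚ))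
        (-((Finset.univ.inf' Finset.univ_nonempty fun i => (τ i : ℚ)) *
            ((Finset.univ.filter fun j => δ j ≠ 0).inf' hne fun j => (τ j : ℚ)))) := by
  classical
  have hTpos : ∀ i, (0 : ℚ) < (τ i : ℚ) := fun i => by exact_mod_cast hτ1 i
  by_cases hmid : ∃ i, 0 < v i ∧ v i < τ i
  · -- Case 1
    obtain ⟨i0, hi1, hi2⟩ := hmid
    set T : Q0 → ℚ := fun i => (τ i : ℚ) with hT
    set V : Q0 → ℚ := fun i => (v i : ℚ) with hV
    set μ : Q0 → ℚ := fun i => V i / T i with hμ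
    set c : Q0 → Q0 → ℚ := fun i j => (E i j : ℚ) * T i * T j with hc
    set R : Q0 → ℚ := fun i => (bform E (Pi.single i 1) (nvec τ) : ℚ) with hR
    have hTpos' : ∀ i, 0 < T i := hTpos
    have hRval : ∀ i, R i = ∑ j, (E i j : ℚ) * T j := by
      intro i; simp only [hR, bform_single]; push_cast; rfl
    have hRneg : ∀ i, R i < 0 := fun i => by
      have := hτ2 i; simp only [hR]; exact_mod_cast this
    have hμ01 : ∀ i, 0 ≤ μ i ∧ μ i ≤ 1 := by
      intro i
      constructor
      · exact div_nonneg (by positivity) (le_of_lt (hTpos' i))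
      · rw [div_le_one (hTpos' i)]
        simp only [hV, hT]
        exact_mod_cast hv i
    -- Step A
    have stepA : (bform E (nvec v) (nvec τ - nvec v) : ℚ) =
        ∑ i, ∑ j, μ i * (1 - μ j) * c i j := by
      unfold bform nvec
      push_cast
      refine Finset.sum_congr rfl fun i _ => Finset.sum_congr rfl fun j _ => ?_
      simp only [hμ, hc, hV, Pi.sub_apply, Int.cast_sub, Int.cast_natCast]
      have h1 := (hTpos' i).ne'
      have h2 := (hTpos' j).ne'
      field_simp
      ring
    -- Step B
    have hcsymm : ∀ i j, c i j = c j i := by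
      intro i j; simp only [hc, hsymm i j]; ring
    have hD : (∑ i, ∑ j, c i j * μ i * (μ i - μ j)) ≤ 0 := by
      have h2 : 2 * (∑ i, ∑ j, c i j * μ i * (μ i - μ j)) =
          ∑ i, ∑ j, c i j * (μ i - μ j) ^ 2 := by
        rw [two_mul]
        nth_rewrite 2 [Finset.sum_comm]
        rw [← Finset.sum_add_distrib]
        refine Finset.sum_congr rfl fun i _ => ?_
        rw [← Finset.sum_add_distrib]
        refine Finset.sum_congr rfl fun j _ => ?_
        rw [hcsymm j i]
        ring
      have hterms : (∑ i, ∑ j, c i j * (μ i - μ j) ^ 2) ≤ 0 := by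
        refine Finset.sum_nonpos fun i _ => Finset.sum_nonpos fun j _ => ?_
        by_cases hij : i = j
        · subst hij; simp
        · have hEij : (E i j : ℚ) ≤ 0 := by exact_mod_cast hoff i j hij
          have hcij : c i j ≤ 0 := by
            simp only [hc]
            nlinarith [mul_pos (hTpos' i) (hTpos' j)]
          nlinarith [sq_nonneg (μ i - μ j)]
      linarith
    have stepB : (∑ i, ∑ j, μ i * (1 - μ j) * c i j) ≤
        ∑ i, μ i * (1 - μ i) * (T i * R i) := by
      have hTR : ∀ i, T i * R i = ∑ j, c i j := by
        intro i; rw [hRval, Finset.mul_sum]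
        refine Finset.sum_congr rfl fun j _ => ?_
        simp only [hc]; ring
      have expand : (∑ i, μ i * (1 - μ i) * (T i * R i)) =
          ∑ i, ∑ j, μ i * (1 - μ i) * c i j := by
        refine Finset.sum_congr rfl fun i _ => ?_
        rw [hTR, Finset.mul_sum]
      rw [expand]
      have diff : (∑ i, ∑ j, μ i * (1 - μ j) * c i j) -
          (∑ i, ∑ j, μ i * (1 - μ i) * c i j) =
          ∑ i, ∑ j, c i j * μ i * (μ i - μ j) := by
        rw [← Finset.sum_sub_distrib]
        refine Finset.sum_congr rfl fun i _ => ?_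
        rw [← Finset.sum_sub_distrib]
        refine Finset.sum_congr rfl fun j _ => ?_
        ring
      linarith [diff, hD]
    -- Step C
    have termNonpos : ∀ i, μ i * (1 - μ i) * (T i * R i) ≤ 0 := by
      intro i
      obtain ⟨h0, h1⟩ := hμ01 i
      have ha : 0 ≤ μ i * (1 - μ i) := mul_nonneg h0 (by linarith)
      have hb : T i * R i < 0 := mul_neg_of_pos_of_neg (hTpos' i) (hRneg i)
      nlinarith
    have stepC : (∑ i, μ i * (1 - μ i) * (T i * R i)) ≤
        μ i0 * (1 - μ i0) * (T i0 * R i0) :=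
      sum_le_term _ termNonpos i0
    -- Step D
    have stepD : μ i0 * (1 - μ i0) * (T i0 * R i0) ≤ (1 - 1 / T i0) * R i0 := by
      have hVlb : (1 : ℚ) ≤ V i0 := by simp only [hV]; exact_mod_cast hi1
      have hVub : V i0 ≤ T i0 - 1 := by
        simp only [hV, hT]
        have h3 : (v i0 : ℚ) + 1 ≤ (τ i0 : ℚ) := by exact_mod_cast hi2
        linarith
      have hTp := hTpos' i0
      have hRn := hRneg i0
      have key : T i0 - 1 ≤ V i0 * (T i0 - V i0) := by nlinarith
      have hprod : V i0 * (T i0 - V i0) * R i0 ≤ (T i0 - 1) * R i0 := by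
        nlinarith [mul_le_mul_of_nonpos_right key hRn.le]
      have e1 : μ i0 * (1 - μ i0) * (T i0 * R i0) = V i0 * (T i0 - V i0) * R i0 / T i0 := by
        simp only [hμ]
        field_simp
      have e2 : (1 - 1 / T i0) * R i0 = (T i0 - 1) * R i0 / T i0 := by
        field_simp
      rw [e1, e2]
      gcongr
    have final : (1 - 1 / T i0) * R i0 ≤
        Finset.univ.sup' Finset.univ_nonempty fun i =>
          (1 - 1 / (τ i : ℚ)) * (bform E (Pi.single i 1) (nvec τ) : ℚ) := by
      have h := Finset.le_sup'
        (fun i => (1 - 1 / (τ i : ℚ)) * (bform E (Pi.single i 1) (nvec τ) : ℚ))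
        (Finset.mem_univ i0)
      exact h
    calc (bform E (nvec v) (nvec τ - nvec v) : ℚ)
        = ∑ i, ∑ j, μ i * (1 - μ j) * c i j := stepA
      _ ≤ ∑ i, μ i * (1 - μ i) * (T i * R i) := stepB
      _ ≤ μ i0 * (1 - μ i0) * (T i0 * R i0) := stepC
      _ ≤ (1 - 1 / T i0) * R i0 := stepD
      _ ≤ _ := final.trans (le_max_left _ _)
  · -- Case 2
    push_neg at hmid
    have hvc : ∀ i, v i = 0 ∨ v i = τ i := by
      intro i
      rcases Nat.eq_zero_or_pos (v i) with h | h
      · exact Or.inl h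
      · exact Or.inr (le_antisymm (hv i) (hmid i h))
    -- every vertex is adjacent to some vertex in the support of δ
    have adj_supp : ∀ i : Q0, ∃ d, δ d ≠ 0 ∧ (quivGraph E).Adj i d := by
      intro i
      by_contra hcon
      push_neg at hcon
      have h1 := hδ.1 i
      rw [bform_single] at h1
      have h0 : (0:ℤ) ≤ ∑ j, E i j * (δ j : ℤ) := by
        refine Finset.sum_nonneg fun j _ => ?_
        by_cases hij : i = j
        · subst hij; rw [hdiag]; positivity
        · by_cases hd : δ j = 0
          · simp [hd]
          · have hna := hcon j hd
            have hE : 0 ≤ E i j := by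
              by_contra hE
              push_neg at hE
              exact hna ((quivGraph_adj E i j).mpr ⟨hij, Or.inl hE⟩)
            positivity
      linarith
    obtain ⟨iP, hiP⟩ : ∃ i, v i ≠ 0 := by
      by_contra h; push_neg at h; exact hv0 (funext fun i => h i)
    obtain ⟨jP, hjP⟩ : ∃ j, v j = 0 := by
      by_contra h; push_neg at h
      exact hvτ (funext fun i => (hvc i).resolve_left (h i))
    -- crossing edge touching the support of δ
    obtain ⟨a, b, hab, hPa, hPb, hdab⟩ :
        ∃ a b, (quivGraph E).Adj a b ∧ v a ≠ 0 ∧ v b = 0 ∧ (δ a ≠ 0 ∨ δ b ≠ 0) := by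
      by_cases hsub : ∀ d, δ d ≠ 0 → v d ≠ 0
      · obtain ⟨d, hd, hadj⟩ := adj_supp jP
        exact ⟨d, jP, hadj.symm, hsub d hd, hjP, Or.inl hd⟩
      push_neg at hsub
      obtain ⟨w0, hw0δ, hw0v⟩ := hsub
      by_cases hsub2 : ∀ d, δ d ≠ 0 → v d = 0
      · obtain ⟨d, hd, hadj⟩ := adj_supp iP
        exact ⟨iP, d, hadj, hiP, hsub2 d hd, Or.inr hd⟩
      push_neg at hsub2
      obtain ⟨u0, hu0δ, hu0v⟩ := hsub2
      rcases hδ.2 ⟨u0, hu0δ⟩ ⟨w0, hw0δ⟩ with hreach | ⟨x, y, hux, hwy, hxy⟩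
      · obtain ⟨wlk⟩ := hreach
        obtain ⟨A, B, hAB, hA, hB⟩ :=
          cross_of_walk (fun s : {i : Q0 // δ i ≠ 0} => v s.1 ≠ 0) wlk hu0v
            (by simpa using hw0v)
        exact ⟨A.1, B.1, hAB, hA, not_not.mp hB, Or.inl A.2⟩
      · by_cases hx : v x.1 ≠ 0
        · by_cases hy : v y.1 = 0
          · rcases hxy with hadj | ⟨w', hw1, hw2⟩
            · exact ⟨x.1, y.1, hadj, hx, hy, Or.inl x.2⟩
            · by_cases hw' : v w' ≠ 0
              · exact ⟨w', y.1, hw2, hw', hy, Or.inr y.2⟩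
              · exact ⟨x.1, w', hw1.symm, hx, not_not.mp hw', Or.inl x.2⟩
          · obtain ⟨wlk⟩ := hwy
            obtain ⟨A, B, hAB, hA, hB⟩ :=
              cross_of_walk (fun s : {i : Q0 // δ i ≠ 0} => v s.1 = 0) wlk hw0v hy
            exact ⟨B.1, A.1, hAB.symm, hB, hA, Or.inl B.2⟩
        · obtain ⟨wlk⟩ := hux
          obtain ⟨A, B, hAB, hA, hB⟩ :=
            cross_of_walk (fun s : {i : Q0 // δ i ≠ 0} => v s.1 ≠ 0) wlk hu0v hx
          exact ⟨A.1, B.1, hAB, hA, not_not.mp hB, Or.inl A.2⟩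
    -- the integer bound
    have haneb : a ≠ b := hab.1
    have hEab : E a b ≤ -1 := by
      have h2 : E a b < 0 := by
        rcases hab.2 with h | h
        · exact h
        · rwa [hsymm a b]
      omega
    have hva : v a = τ a := (hvc a).resolve_left hPa
    have hterm : ∀ i j, (v i : ℤ) * E i j * ((τ j : ℤ) - (v j : ℤ)) ≤ 0 := by
      intro i j
      by_cases hij : i = j
      · subst hij
        rcases hvc i with h | h <;> simp [h, hdiag i]
      · have h1 : (v i : ℤ) * E i j ≤ 0 :=
          mul_nonpos_of_nonneg_of_nonpos (by positivity) (hoff i j hij)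
        have h2 : (0:ℤ) ≤ (τ j : ℤ) - (v j : ℤ) := by
          have := hv j
          omega
        exact mul_nonpos_of_nonpos_of_nonneg h1 h2
    have hZ : bform E (nvec v) (nvec τ - nvec v) ≤ -((τ a : ℤ) * (τ b : ℤ)) := by
      have hle := sum_sum_le_term (fun i j => (v i : ℤ) * E i j * ((τ j : ℤ) - (v j : ℤ)))
        hterm a b
      have hbf : bform E (nvec v) (nvec τ - nvec v) =
          ∑ i, ∑ j, (v i : ℤ) * E i j * ((τ j : ℤ) - (v j : ℤ)) := by
        unfold bform nvec; rfl
      rw [hbf]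
      have hfab : (v a : ℤ) * E a b * ((τ b : ℤ) - (v b : ℤ)) ≤ -((τ a : ℤ) * (τ b : ℤ)) := by
        rw [hva, hPb]
        push_cast
        have hta : (0:ℤ) ≤ (τ a : ℤ) := by positivity
        have htb : (0:ℤ) ≤ (τ b : ℤ) := by positivity
        nlinarith [mul_nonneg hta htb]
      exact hle.trans hfab
    have hQ : (bform E (nvec v) (nvec τ - nvec v) : ℚ) ≤ -((τ a : ℚ) * (τ b : ℚ)) := by
      exact_mod_cast hZ
    refine hQ.trans (le_trans ?_ (le_max_right _ _))
    rw [neg_le_neg_iff]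
    have hm1 : ∀ i : Q0, (Finset.univ.inf' Finset.univ_nonempty fun i => (τ i : ℚ)) ≤ (τ i : ℚ) :=
      fun i => Finset.inf'_le _ (Finset.mem_univ i)
    have hm2 : ∀ i : Q0, δ i ≠ 0 →
        ((Finset.univ.filter fun j => δ j ≠ 0).inf' hne fun j => (τ j : ℚ)) ≤ (τ i : ℚ) :=
      fun i hi => Finset.inf'_le _ (by simp [hi])
    have hm1n : (0:ℚ) ≤ Finset.univ.inf' Finset.univ_nonempty fun i => (τ i : ℚ) :=
      Finset.le_inf' _ _ (fun i _ => (hTpos i).le)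
    rcases hdab with hda | hdb
    · calc (Finset.univ.inf' Finset.univ_nonempty fun i => (τ i : ℚ)) *
          ((Finset.univ.filter fun j => δ j ≠ 0).inf' hne fun j => (τ j : ℚ))
          ≤ (τ b : ℚ) * (τ a : ℚ) :=
            mul_le_mul (hm1 b) (hm2 a hda) (Finset.le_inf' _ _ (fun i _ => (hTpos i).le)) (hTpos b).le
        _ = (τ a : ℚ) * (τ b : ℚ) := mul_comm _ _
    · calc (Finset.univ.inf' Finset.univ_nonempty fun i => (τ i : ℚ)) *
          ((Finset.univ.filter fun j => δ j ≠ 0).inf' hne fun j => (τ j : ℚ))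
          ≤ (τ a : ℚ) * (τ b : ℚ) :=
            mul_le_mul (hm1 a) (hm2 b hdb) (Finset.le_inf' _ _ (fun i _ => (hTpos i).le)) (hTpos a).le
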